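/- Let G be a finite group that contains no element of order 9, and let H be a normal subgroup of index 3 in G. Then there exists a subgroup F of G of order 3 such that H ∩ F is trivial and H·F = G; in other words, G is an internal semidirect product of H and a cyclic group of order 3 (G ≅ H ⋊ μ_3). -/

import Mathlib

open scoped Pointwise

/-- Let `G` be a finite group that contains no element of order `9`, and let `H` be a normal
subgroup of index `3` in `G`. Then there exists a subgroup `F` of `G` of order `3` such that
`H ∩ F` is trivial and `H·F = G`; in other words, `G` is an internal semidirect product of
`H` and a cyclic group of order `3` (`G ≅ H ⋊ μ₃`). -/
theorem stmt_4 (G : Type) [Group G] [Finite G] (h9 : ∀ g : G, orderOf g ≠ 9)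
    (H : Subgroup G) [H.Normal] (hH : H.index = 3) :
    ∃ F : Subgroup G, Nat.card F = 3 ∧ H ⊓ F = ⊥ ∧ (H : Set G) * (F : Set G) = Set.univ := by
  have hcard : Nat.card (G ⧸ H) = 3 := hH
  have hnt : Nontrivial (G ⧸ H) := by
    apply Finite.one_lt_card_iff_nontrivial.mp
    omega
  obtain ⟨q, hq⟩ := exists_ne (1 : G ⧸ H)
  obtain ⟨g, rfl⟩ := QuotientGroup.mk_surjective q
  have hord3 : orderOf ((g : G ⧸ H)) = 3 := by
    have hdvd : orderOf ((g : G ⧸ H)) ∣ 3 := hcard ▸ orderOf_dvd_natCard _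
    rcases (Nat.prime_three.eq_one_or_self_of_dvd _ hdvd) with h | h
    · exact absurd (orderOf_eq_one_iff.mp h) hq
    · exact h
  set n := orderOf g with hn
  have hn0 : n ≠ 0 := (orderOf_pos g).ne'
  have h3n : 3 ∣ n := hord3 ▸ orderOf_map_dvd (QuotientGroup.mk' H) g
  set a := n.factorization 3 with ha
  set m := n / 3 ^ a with hm
  have ha1 : 1 ≤ a := Nat.Prime.factorization_pos_of_dvd Nat.prime_three hn0 h3n
  have hmn : 3 ^ a * m = n := Nat.ordProj_mul_ordCompl_eq_self n 3
  have h3m : ¬ 3 ∣ m := Nat.not_dvd_ordCompl Nat.prime_three hn0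
  have hmdvd : m ∣ n := Nat.ordCompl_dvd n 3
  set x := g ^ m with hx
  have hordx : orderOf x = 3 ^ a := by
    rw [hx, orderOf_pow, ← hn, Nat.gcd_eq_right hmdvd]
    exact Nat.div_eq_of_eq_mul_left (Nat.pos_of_ne_zero fun h => hn0 (by rw [← hmn, h, mul_zero])) hmn.symm
  -- a = 1 since no element of order 9
  have ha_eq : a = 1 := by
    by_contra hne
    have ha2 : 2 ≤ a := by omega
    have : orderOf (x ^ 3 ^ (a - 2)) = 9 := by
      rw [orderOf_pow, hordx, Nat.gcd_eq_right (pow_dvd_pow 3 (by omega)),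
        Nat.pow_div (by omega) (by norm_num)]
      have : a - (a - 2) = 2 := by omega
      rw [this]
    exact h9 _ this
  rw [ha_eq, pow_one] at hordx
  have hm3 : Nat.gcd 3 m = 1 := (Nat.Prime.coprime_iff_not_dvd Nat.prime_three).mpr h3m
  have hxq : orderOf ((x : G ⧸ H)) = 3 := by
    have : ((x : G ⧸ H)) = ((g : G ⧸ H)) ^ m := rfl
    rw [this, orderOf_pow, hord3, hm3, Nat.div_one]
  have hxH : x ∉ H := by
    intro hxH
    have : ((x : G ⧸ H)) = 1 := (QuotientGroup.eq_one_iff x).mpr hxH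
    rw [this, orderOf_one] at hxq
    omega
  refine ⟨Subgroup.zpowers x, ?_, ?_, ?_⟩
  · rw [Nat.card_zpowers, hordx]
  · rw [eq_bot_iff]
    intro y ⟨hyH, hyF⟩
    obtain ⟨j, rfl⟩ := hyF
    have h1 : ((x : G ⧸ H)) ^ j = 1 := by
      have : ((x ^ j : G) : G ⧸ H) = ((x : G ⧸ H)) ^ j := rfl
      rw [← this]
      exact (QuotientGroup.eq_one_iff _).mpr hyH
    have h3j : (3 : ℤ) ∣ j := by
      have := orderOf_dvd_iff_zpow_eq_one.mpr h1
      rwa [hxq] at this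
      
    obtain ⟨k, rfl⟩ := h3j
    have hx3 : x ^ (3 : ℕ) = 1 := hordx ▸ pow_orderOf_eq_one x
    simp only [Subgroup.mem_bot]
    calc x ^ (3 * k) = (x ^ (3 : ℤ)) ^ k := by rw [← zpow_mul]
    _ = 1 := by rw [show (3:ℤ) = ((3:ℕ):ℤ) by norm_num, zpow_natCast, hx3, one_zpow]
  · have htop : H ⊔ Subgroup.zpowers x = ⊤ := by
      rw [eq_top_iff]
      intro y _
      have hzq : Subgroup.zpowers ((x : G ⧸ H)) = ⊤ := by
        apply Subgroup.eq_top_of_card_eq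
        rw [Nat.card_zpowers, hxq, hcard]
      have : (y : G ⧸ H) ∈ Subgroup.zpowers ((x : G ⧸ H)) := hzq ▸ Subgroup.mem_top _
      obtain ⟨j, hj⟩ := this
      have hmem : (x ^ j)⁻¹ * y ∈ H := by
        rw [← QuotientGroup.eq_one_iff]
        have : ((x ^ j : G) : G ⧸ H) = (y : G ⧸ H) := by
          rw [← hj]; rfl
        simp [this]
      have : y = (x ^ j) * ((x ^ j)⁻¹ * y) := by group
      rw [this]
      exact Subgroup.mul_mem _ (Subgroup.mem_sup_right ⟨j, rfl⟩)
        (Subgroup.mem_sup_left hmem)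
    rw [← Subgroup.normal_mul, htop, Subgroup.coe_top]
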